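/- arXiv:1801.04088 — 2 statements merged into one kernel-verified Lean document; each statement's English description precedes it below -/
import Mathlib

section
/- Assume Assumption (β) and let Ω ⊆ V be nonempty; set m_Ω = inf{ β⁺(x)/m(x) : x ∈ Ω }. Then m_Ω · h̃(Ω)²/8 ≤ ν(Δ^D_Ω). -/
open Function Complex

noncomputable def betaPlus {V : Type*} (b : V → V → ℝ) (x : V) : ℝ := ∑ᶠ y, b x y
noncomputable def betaMinus {V : Type*} (b : V → V → ℝ) (x : V) : ℝ := ∑ᶠ y, b y x

/-- The Laplacian `Δf(x) = (1/m(x)) Σ_y b(x,y)(f(x) - f(y))`; the normalized Laplacian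
`Δ̃` is the case `m = β⁺`. -/
noncomputable def lap {V : Type*} (b : V → V → ℝ) (m : V → ℝ) (f : V → ℂ) (x : V) : ℂ :=
  (1 / (m x : ℂ)) * ∑ᶠ y, (b x y : ℂ) * (f x - f y)

/-- The weighted inner product `(f,g)_w = Σ_x w(x) f(x) conj(g(x))`. -/
noncomputable def innerW {V : Type*} (w : V → ℝ) (f g : V → ℂ) : ℂ :=
  ∑ᶠ x, (w x : ℂ) * f x * (starRingEnd ℂ) (g x)

/-- The total edge-boundary weight of a finite set `U`:
`b(∂_E U) = Σ_{x∈U, y∉U} b(x,y) + Σ_{x∉U, y∈U} b(x,y)`. -/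
noncomputable def bdryWeight {V : Type*} [DecidableEq V] (b : V → V → ℝ) (U : Finset V) :
    ℝ :=
  ∑ x ∈ U, ∑ᶠ y, (if y ∈ U then 0 else b x y + b y x)

/-- The Cheeger constant of `Ω ⊆ V` with respect to the weight `w`:
`h(Ω) = inf { b(∂_E U) / w(U) : U ⊆ Ω finite nonempty }`. -/
noncomputable def cheeger {V : Type*} [DecidableEq V] (b : V → V → ℝ) (w : V → ℝ)
    (Ω : Set V) : ℝ :=
  sInf {r : ℝ | ∃ U : Finset V, U.Nonempty ∧ ↑U ⊆ Ω ∧ r = bdryWeight b U / ∑ x ∈ U, w x}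

/-- The bottom of the real part of the numerical range of the Dirichlet Laplacian on `Ω`:
`ν(Δ^D_Ω) = inf { Re (Δf, f)_m : f finitely supported, supp f ⊆ Ω, ‖f‖_m = 1 }`. -/
noncomputable def nuD {V : Type*} (b : V → V → ℝ) (m : V → ℝ) (Ω : Set V) : ℝ :=
  sInf {r : ℝ | ∃ f : V → ℂ, (support f).Finite ∧ support f ⊆ Ω ∧
    innerW m f f = 1 ∧ r = (innerW m (lap b m f) f).re}

lemma min_add_max_sub (x c : ℝ) : min x c + max (x - c) 0 = x := by
  have h1 : max (x - c) 0 = max x c - c := by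
    rw [show (0:ℝ) = c - c by ring, max_sub_sub_right]
  have h2 := min_add_max x c
  linarith

lemma abs_split (a b c : ℝ) :
    |a - b| = |min a c - min b c| + |max (a - c) 0 - max (b - c) 0| := by
  rcases le_total b a with h | h
  · have h1 : min b c ≤ min a c := min_le_min h le_rfl
    have h2 : max (b - c) 0 ≤ max (a - c) 0 := max_le_max (by linarith) le_rfl
    rw [_root_.abs_of_nonneg (by linarith), _root_.abs_of_nonneg (by linarith),
      _root_.abs_of_nonneg (by linarith)]
    have ka := min_add_max_sub a c
    have kb := min_add_max_sub b c
    linarith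
  · have h1 : min a c ≤ min b c := min_le_min h le_rfl
    have h2 : max (a - c) 0 ≤ max (b - c) 0 := max_le_max (by linarith) le_rfl
    rw [_root_.abs_of_nonpos (by linarith), _root_.abs_of_nonpos (by linarith),
      _root_.abs_of_nonpos (by linarith)]
    have ka := min_add_max_sub a c
    have kb := min_add_max_sub b c
    linarith

lemma bdryWeight_nonneg {V : Type*} [DecidableEq V] (b : V → V → ℝ)
    (hb : ∀ x y, 0 ≤ b x y) (U : Finset V) : 0 ≤ bdryWeight b U := by
  refine Finset.sum_nonneg fun x _ => finsum_nonneg fun y => ?_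
  split_ifs
  · exact le_rfl
  · exact add_nonneg (hb x y) (hb y x)

lemma cheeger_nonneg {V : Type*} [DecidableEq V] (b : V → V → ℝ)
    (hb : ∀ x y, 0 ≤ b x y) (hβp_pos : ∀ x, 0 < betaPlus b x) (Ω : Set V) :
    0 ≤ cheeger b (betaPlus b) Ω := by
  refine Real.sInf_nonneg ?_
  rintro r ⟨U, hUne, hUΩ, rfl⟩
  exact div_nonneg (bdryWeight_nonneg b hb U)
    (Finset.sum_nonneg fun x _ => (hβp_pos x).le)

lemma cheeger_bddBelow {V : Type*} [DecidableEq V] (b : V → V → ℝ)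
    (hb : ∀ x y, 0 ≤ b x y) (hβp_pos : ∀ x, 0 < betaPlus b x) (Ω : Set V) :
    BddBelow {r : ℝ | ∃ U : Finset V, U.Nonempty ∧ ↑U ⊆ Ω ∧
      r = bdryWeight b U / ∑ x ∈ U, betaPlus b x} := by
  refine ⟨0, ?_⟩
  rintro r ⟨U, hUne, hUΩ, rfl⟩
  exact div_nonneg (bdryWeight_nonneg b hb U)
    (Finset.sum_nonneg fun x _ => (hβp_pos x).le)

lemma core_cheeger {V : Type*} [DecidableEq V] (b : V → V → ℝ)
    (hb : ∀ x y, 0 ≤ b x y) (hβp_pos : ∀ x, 0 < betaPlus b x)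
    (Ω : Set V) (T : Finset V) :
    ∀ n : ℕ, ∀ g : V → ℝ, (∀ x, 0 ≤ g x) →
      (∀ x, g x ≠ 0 → x ∈ Ω ∧ x ∈ T ∧ ∀ y, (b x y ≠ 0 ∨ b y x ≠ 0) → y ∈ T) →
      ((T.filter fun x => g x ≠ 0).image g).card ≤ n →
      cheeger b (betaPlus b) Ω * ∑ x ∈ T, betaPlus b x * g x ≤
        ∑ x ∈ T, ∑ y ∈ T, b x y * |g x - g y| := by
  intro n
  induction n with
  | zero =>
    intro g hg0 hsupp hcard
    have hzero : ∀ x ∈ T, g x = 0 := by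
      intro x hxT
      by_contra hx
      have hmem : g x ∈ (T.filter fun x => g x ≠ 0).image g :=
        Finset.mem_image_of_mem g (Finset.mem_filter.mpr ⟨hxT, hx⟩)
      have := Finset.card_pos.mpr ⟨_, hmem⟩
      omega
    have h1 : ∑ x ∈ T, betaPlus b x * g x = 0 :=
      Finset.sum_eq_zero fun x hx => by rw [hzero x hx, mul_zero]
    have h2 : ∑ x ∈ T, ∑ y ∈ T, b x y * |g x - g y| = 0 :=
      Finset.sum_eq_zero fun x hx => Finset.sum_eq_zero fun y hy => by
        rw [hzero x hx, hzero y hy]; simp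
    rw [h1, h2, mul_zero]
  | succ n ih =>
    intro g hg0 hsupp hcard
    set Vals := (T.filter fun x => g x ≠ 0).image g with hVals
    by_cases hle : Vals.card ≤ n
    · exact ih g hg0 hsupp hle
    have hne : Vals.Nonempty := Finset.card_pos.mp (by omega)
    set c := Vals.min' hne with hc
    obtain ⟨x₀, hx₀, hgx₀⟩ := Finset.mem_image.mp (Vals.min'_mem hne)
    have hx₀ne : g x₀ ≠ 0 := (Finset.mem_filter.mp hx₀).2
    have hcpos : 0 < c := by
      rw [hc, ← hgx₀]; exact lt_of_le_of_ne (hg0 x₀) (Ne.symm hx₀ne)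
    have hmin : ∀ x, g x ≠ 0 → c ≤ g x := fun x hx =>
      Vals.min'_le _ (Finset.mem_image_of_mem g
        (Finset.mem_filter.mpr ⟨(hsupp x hx).2.1, hx⟩))
    set U := T.filter fun x => g x ≠ 0 with hU
    have hUiff : ∀ y, y ∈ U ↔ g y ≠ 0 := fun y =>
      ⟨fun h => (Finset.mem_filter.mp h).2,
       fun h => Finset.mem_filter.mpr ⟨(hsupp y h).2.1, h⟩⟩
    set g1 : V → ℝ := fun x => min (g x) c with hg1def
    set g2 : V → ℝ := fun x => max (g x - c) 0 with hg2def
    have hsum : ∀ x, g x = g1 x + g2 x := fun x => (min_add_max_sub (g x) c).symm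
    have hg1U : ∀ x, g1 x = if g x ≠ 0 then c else 0 := by
      intro x
      show min (g x) c = if g x ≠ 0 then c else 0
      by_cases hx : g x ≠ 0
      · rw [if_pos hx]; exact min_eq_right (hmin x hx)
      · rw [if_neg hx]; push_neg at hx; rw [hx]; exact min_eq_left hcpos.le
    have hg2zero : ∀ x, g x = 0 → g2 x = 0 := by
      intro x hx
      show max (g x - c) 0 = 0
      rw [hx, zero_sub]
      exact max_eq_right (by linarith)
    -- split of the LHS
    have hL : ∑ x ∈ T, betaPlus b x * g x
        = ∑ x ∈ T, betaPlus b x * g1 x + ∑ x ∈ T, betaPlus b x * g2 x := by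
      rw [← Finset.sum_add_distrib]
      exact Finset.sum_congr rfl fun x _ => by rw [← mul_add, ← hsum x]
    -- split of the RHS
    have hR : ∑ x ∈ T, ∑ y ∈ T, b x y * |g x - g y|
        = ∑ x ∈ T, ∑ y ∈ T, b x y * |g1 x - g1 y|
          + ∑ x ∈ T, ∑ y ∈ T, b x y * |g2 x - g2 y| := by
      rw [← Finset.sum_add_distrib]
      refine Finset.sum_congr rfl fun x _ => ?_
      rw [← Finset.sum_add_distrib]
      refine Finset.sum_congr rfl fun y _ => ?_
      rw [← mul_add, abs_split (g x) (g y) c]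
    -- the bound for g2 via the induction hypothesis
    have hsupp2 : ∀ x, g2 x ≠ 0 →
        x ∈ Ω ∧ x ∈ T ∧ ∀ y, (b x y ≠ 0 ∨ b y x ≠ 0) → y ∈ T := by
      intro x hx
      have hgx : g x ≠ 0 := fun h => hx (hg2zero x h)
      exact hsupp x hgx
    have hcard2 : ((T.filter fun x => g2 x ≠ 0).image g2).card ≤ n := by
      have hsub : (T.filter fun x => g2 x ≠ 0).image g2 ⊆
          (Vals.erase c).image (fun v => v - c) := by
        intro v hv
        obtain ⟨x, hx, rfl⟩ := Finset.mem_image.mp hv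
        have hx2 : g2 x ≠ 0 := (Finset.mem_filter.mp hx).2
        have hgx : g x ≠ 0 := fun h => hx2 (hg2zero x h)
        have hge := hmin x hgx
        have hgc : c < g x := by
          rcases lt_or_eq_of_le hge with h | h
          · exact h
          · exfalso; apply hx2
            show max (g x - c) 0 = 0
            rw [← h, sub_self, max_self]
        have hval : g2 x = g x - c := max_eq_left (by linarith)
        refine Finset.mem_image.mpr ⟨g x, Finset.mem_erase.mpr ⟨(ne_of_gt hgc), ?_⟩, hval.symm⟩
        exact Finset.mem_image_of_mem g (Finset.mem_filter.mpr ⟨(hsupp x hgx).2.1, hgx⟩)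
      calc ((T.filter fun x => g2 x ≠ 0).image g2).card
          ≤ ((Vals.erase c).image (fun v => v - c)).card := Finset.card_le_card hsub
        _ ≤ (Vals.erase c).card := Finset.card_image_le
        _ = Vals.card - 1 := Finset.card_erase_of_mem (Vals.min'_mem hne)
        _ ≤ n := by
            have h4 : Vals.card ≤ n + 1 := hcard
            omega
    have hIH2 := ih g2 (fun x => le_max_right _ 0) hsupp2 hcard2
    -- the bound for g1 via the Cheeger constant
    have hUne : U.Nonempty := ⟨x₀, hx₀⟩
    have hUΩ : ↑U ⊆ Ω := fun x hx => (hsupp x ((hUiff x).mp hx)).1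
    have hβU_pos : 0 < ∑ x ∈ U, betaPlus b x :=
      Finset.sum_pos (fun x _ => hβp_pos x) hUne
    have hch : cheeger b (betaPlus b) Ω ≤
        bdryWeight b U / ∑ x ∈ U, betaPlus b x :=
      csInf_le (cheeger_bddBelow b hb hβp_pos Ω) ⟨U, hUne, hUΩ, rfl⟩
    -- identify the g1 energy with c * bdryWeight b U
    have hbd : ∑ x ∈ T, ∑ y ∈ T, b x y * |g1 x - g1 y| = c * bdryWeight b U := by
      have hterm : ∀ x y, b x y * |g1 x - g1 y| =
          (if g x ≠ 0 ∧ ¬ g y ≠ 0 then c * b x y else 0)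
          + (if ¬ g x ≠ 0 ∧ g y ≠ 0 then c * b x y else 0) := by
        intro x y
        rw [hg1U x, hg1U y]
        by_cases hx : g x ≠ 0 <;> by_cases hy : g y ≠ 0 <;>
          simp [hx, hy, _root_.abs_of_nonneg hcpos.le, mul_comm]
      have hstep1 : ∑ x ∈ T, ∑ y ∈ T, b x y * |g1 x - g1 y|
          = ∑ x ∈ T, ∑ y ∈ T, ((if g x ≠ 0 ∧ ¬ g y ≠ 0 then c * b x y else 0)
            + (if g x ≠ 0 ∧ ¬ g y ≠ 0 then c * b y x else 0)) := by
        rw [Finset.sum_congr rfl fun x _ => Finset.sum_congr rfl fun y _ => hterm x y]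
        rw [Finset.sum_congr rfl fun (x : V) _ =>
          (Finset.sum_add_distrib (s := T)
            (f := fun y => if g x ≠ 0 ∧ ¬ g y ≠ 0 then c * b x y else 0)
            (g := fun y => if ¬ g x ≠ 0 ∧ g y ≠ 0 then c * b x y else 0))]
        rw [Finset.sum_add_distrib]
        rw [Finset.sum_congr rfl fun (x : V) _ =>
          (Finset.sum_add_distrib (s := T)
            (f := fun y => if g x ≠ 0 ∧ ¬ g y ≠ 0 then c * b x y else 0)
            (g := fun y => if g x ≠ 0 ∧ ¬ g y ≠ 0 then c * b y x else 0))]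
        rw [Finset.sum_add_distrib]
        congr 1
        rw [Finset.sum_comm]
        refine Finset.sum_congr rfl fun x _ => Finset.sum_congr rfl fun y _ => ?_
        by_cases hx : g x ≠ 0 <;> by_cases hy : g y ≠ 0 <;> simp [hx, hy]
      rw [hstep1]
      -- collapse the outer condition
      have hstep2 : ∀ x, (∑ y ∈ T, ((if g x ≠ 0 ∧ ¬ g y ≠ 0 then c * b x y else 0)
            + (if g x ≠ 0 ∧ ¬ g y ≠ 0 then c * b y x else 0)))
          = if g x ≠ 0 then ∑ y ∈ T, (if y ∈ U then 0 else c * (b x y + b y x)) else 0 := by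
        intro x
        by_cases hx : g x ≠ 0
        · rw [if_pos hx]
          refine Finset.sum_congr rfl fun y _ => ?_
          by_cases hy : g y ≠ 0 <;> simp [hx, hy, hUiff] <;> ring
        · rw [if_neg hx]
          refine Finset.sum_eq_zero fun y _ => ?_
          simp [hx]
      rw [Finset.sum_congr rfl fun x _ => hstep2 x]
      rw [← Finset.sum_filter]
      -- now identify with c * bdryWeight
      rw [bdryWeight, Finset.mul_sum]
      refine Finset.sum_congr rfl fun x hx => ?_
      have hgx : g x ≠ 0 := (hUiff x).mp hx
      have hfin : ∑ᶠ y, (if y ∈ U then 0 else b x y + b y x)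
          = ∑ y ∈ T, (if y ∈ U then 0 else b x y + b y x) := by
        apply finsum_eq_finset_sum_of_support_subset
        intro y hy
        simp only [Function.mem_support] at hy
        have hyU : y ∉ U := by
          intro h; rw [if_pos h] at hy; exact hy rfl
        rw [if_neg hyU] at hy
        have : b x y ≠ 0 ∨ b y x ≠ 0 := by
          by_contra hcon
          push_neg at hcon
          rw [hcon.1, hcon.2, add_zero] at hy
          exact hy rfl
        exact (hsupp x hgx).2.2 y this
      rw [hfin, Finset.mul_sum]
      refine Finset.sum_congr rfl fun y _ => ?_
      by_cases hy : y ∈ U <;> simp [hy]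
    -- identify the g1 mass
    have hmass : ∑ x ∈ T, betaPlus b x * g1 x = (∑ x ∈ U, betaPlus b x) * c := by
      rw [Finset.sum_mul]
      rw [Finset.sum_filter]
      refine Finset.sum_congr rfl fun x _ => ?_
      rw [hg1U x]
      by_cases hx : g x ≠ 0 <;> simp [hx]
    have hg1bound : cheeger b (betaPlus b) Ω * ∑ x ∈ T, betaPlus b x * g1 x
        ≤ ∑ x ∈ T, ∑ y ∈ T, b x y * |g1 x - g1 y| := by
      rw [hmass, hbd]
      have h1 : cheeger b (betaPlus b) Ω * (∑ x ∈ U, betaPlus b x) ≤ bdryWeight b U :=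
        (le_div_iff₀ hβU_pos).mp hch
      calc cheeger b (betaPlus b) Ω * ((∑ x ∈ U, betaPlus b x) * c)
          = (cheeger b (betaPlus b) Ω * (∑ x ∈ U, betaPlus b x)) * c := by ring
        _ ≤ bdryWeight b U * c := mul_le_mul_of_nonneg_right h1 hcpos.le
        _ = c * bdryWeight b U := by ring
    rw [hL, hR, mul_add]
    exact add_le_add hg1bound hIH2

/-- assume Assumption (β), let `Ω ⊆ V` be nonempty and set
`m_Ω = inf { β⁺(x)/m(x) : x ∈ Ω }`. Then `m_Ω h̃(Ω)²/8 ≤ ν(Δ^D_Ω)`. -/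
theorem cheeger_lower_bound_weighted
    (V : Type*) [Countable V] [DecidableEq V] (b : V → V → ℝ) (m : V → ℝ)
    (hb_nonneg : ∀ x y, 0 ≤ b x y)
    (hb_loop : ∀ x, b x x = 0)
    (hloc_fin : ∀ x, {y | b x y ≠ 0 ∨ b y x ≠ 0}.Finite)
    (hm_pos : ∀ x, 0 < m x)
    (hβp_pos : ∀ x, 0 < betaPlus b x)
    (hβm_pos : ∀ x, 0 < betaMinus b x)
    (hβ : ∀ x, betaPlus b x = betaMinus b x)
    (Ω : Set V) (hΩ : Ω.Nonempty) :
    sInf {r : ℝ | ∃ x ∈ Ω, r = betaPlus b x / m x} *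
        (cheeger b (betaPlus b) Ω) ^ 2 / 8
      ≤ nuD b m Ω := by
  obtain ⟨x₀, hx₀Ω⟩ := hΩ
  set mΩ := sInf {r : ℝ | ∃ x ∈ Ω, r = betaPlus b x / m x} with hmΩdef
  set hC := cheeger b (betaPlus b) Ω with hCdef
  -- the nuD set is nonempty
  have hwitness : ∃ r : ℝ, ∃ f : V → ℂ, (support f).Finite ∧ support f ⊆ Ω ∧
      innerW m f f = 1 ∧ r = (innerW m (lap b m f) f).re := by
    set f₀ : V → ℂ := fun x => if x = x₀ then ((Real.sqrt (m x₀))⁻¹ : ℝ) else 0 with hf₀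
    have hs : Real.sqrt (m x₀) ≠ 0 := ne_of_gt (Real.sqrt_pos.mpr (hm_pos x₀))
    have hsup : support f₀ ⊆ {x₀} := by
      intro x hx
      simp only [mem_support, hf₀] at hx
      by_contra hne
      have hxne : x ≠ x₀ := fun h => hne (by simp [h])
      simp [hxne] at hx
    refine ⟨(innerW m (lap b m f₀) f₀).re, f₀, Set.Finite.subset (Set.finite_singleton x₀) hsup,
      hsup.trans (by simpa using hx₀Ω), ?_, rfl⟩
    have h1 : innerW m f₀ f₀ = (m x₀ : ℂ) * f₀ x₀ * (starRingEnd ℂ) (f₀ x₀) := by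
      apply finsum_eq_single
      intro x hx
      have : f₀ x = 0 := by simp [hf₀, hx]
      rw [this, mul_zero, map_zero, mul_zero]
    rw [h1]
    simp only [hf₀, if_pos rfl]
    rw [Complex.conj_ofReal, ← Complex.ofReal_mul, ← Complex.ofReal_mul,
      ← Complex.ofReal_one, Complex.ofReal_inj]
    field_simp
    rw [Real.sq_sqrt (hm_pos x₀).le]
  obtain ⟨r₀, hr₀⟩ := hwitness
  rw [nuD]
  apply le_csInf ⟨r₀, hr₀⟩
  rintro r ⟨f, hf_fin, hf_supp, hf_norm, rfl⟩
  -- set up the finite sets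
  set S0 := hf_fin.toFinset with hS0
  set T := S0 ∪ S0.biUnion (fun x => (hloc_fin x).toFinset) with hT
  have hTmem : ∀ x, f x ≠ 0 → x ∈ T := fun x hx =>
    Finset.mem_union_left _ (hf_fin.mem_toFinset.mpr hx)
  have hTnbr : ∀ x, f x ≠ 0 → ∀ y, (b x y ≠ 0 ∨ b y x ≠ 0) → y ∈ T := by
    intro x hx y hy
    exact Finset.mem_union_right _ (Finset.mem_biUnion.mpr
      ⟨x, hf_fin.mem_toFinset.mpr hx, (hloc_fin x).mem_toFinset.mpr hy⟩)
  set g : V → ℝ := fun x => ‖f x‖ ^ 2 with hg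
  have hg0 : ∀ x, 0 ≤ g x := fun x => sq_nonneg _
  have hgne : ∀ x, g x ≠ 0 ↔ f x ≠ 0 := by
    intro x
    simp [hg, pow_eq_zero_iff, map_eq_zero]
  -- balance identities
  have hbal1 : ∀ w : V → ℝ, (∀ x, w x ≠ 0 → f x ≠ 0) →
      ∑ x ∈ T, ∑ y ∈ T, b x y * w x = ∑ x ∈ T, betaPlus b x * w x := by
    intro w hw
    refine Finset.sum_congr rfl fun x _ => ?_
    rw [← Finset.sum_mul]
    by_cases hwx : w x = 0
    · rw [hwx, mul_zero, mul_zero]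
    · congr 1
      have hfx := hw x hwx
      rw [betaPlus]
      exact (finsum_eq_finset_sum_of_support_subset _ fun y hy =>
        hTnbr x hfx y (Or.inl hy)).symm
  have hbal2 : ∀ w : V → ℝ, (∀ x, w x ≠ 0 → f x ≠ 0) →
      ∑ x ∈ T, ∑ y ∈ T, b x y * w y = ∑ x ∈ T, betaPlus b x * w x := by
    intro w hw
    rw [Finset.sum_comm]
    have hstep : ∑ y ∈ T, ∑ x ∈ T, b x y * w y = ∑ y ∈ T, betaMinus b y * w y := by
      refine Finset.sum_congr rfl fun y _ => ?_
      rw [← Finset.sum_mul]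
      by_cases hwy : w y = 0
      · rw [hwy, mul_zero, mul_zero]
      · congr 1
        have hfy := hw y hwy
        rw [betaMinus]
        exact (finsum_eq_finset_sum_of_support_subset _ fun x hx =>
          hTnbr y hfy x (Or.inr hx)).symm
    rw [hstep]
    exact Finset.sum_congr rfl fun x _ => by rw [hβ x]
  have hwg : ∀ x, g x ≠ 0 → f x ≠ 0 := fun x hx => (hgne x).mp hx
  set Sm := ∑ x ∈ T, betaPlus b x * g x with hSm
  -- normalization
  have hnorm1 : ∑ x ∈ T, m x * g x = 1 := by
    have h1 : innerW m f f = ∑ x ∈ T, (m x : ℂ) * f x * (starRingEnd ℂ) (f x) := by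
      apply finsum_eq_finset_sum_of_support_subset
      intro x hx
      simp only [mem_support] at hx
      have hfx : f x ≠ 0 := by
        intro h; apply hx; rw [h, mul_zero, map_zero, mul_zero]
      exact hTmem x hfx
    have h2 : ∀ x, (m x : ℂ) * f x * (starRingEnd ℂ) (f x) = ((m x * g x : ℝ) : ℂ) := by
      intro x
      rw [mul_assoc, Complex.mul_conj, ← Complex.ofReal_mul]
      congr 2
      show Complex.normSq (f x) = ‖f x‖ ^ 2
      rw [Complex.sq_norm]
    rw [h1] at hf_norm
    rw [Finset.sum_congr rfl (fun x _ => h2 x)] at hf_norm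
    rw [← Complex.ofReal_sum, show (1 : ℂ) = ((1 : ℝ) : ℂ) by norm_num,
      Complex.ofReal_inj] at hf_norm
    exact hf_norm
  -- the quadratic form identity
  have hre : (innerW m (lap b m f) f).re
      = ∑ x ∈ T, ∑ y ∈ T, b x y * ((f x - f y) * (starRingEnd ℂ) (f x)).re := by
    have e1 : innerW m (lap b m f) f
        = ∑ x ∈ T, (m x : ℂ) * lap b m f x * (starRingEnd ℂ) (f x) := by
      apply finsum_eq_finset_sum_of_support_subset
      intro x hx
      simp only [mem_support] at hx
      have hfx : f x ≠ 0 := by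
        intro h; apply hx; rw [h, map_zero, mul_zero]
      exact hTmem x hfx
    rw [e1, Complex.re_sum]
    refine Finset.sum_congr rfl fun x hx => ?_
    by_cases hfx : f x = 0
    · rw [hfx]
      simp
    · have hmx : (m x : ℂ) ≠ 0 := Complex.ofReal_ne_zero.mpr (ne_of_gt (hm_pos x))
      have e2 : (m x : ℂ) * lap b m f x = ∑ᶠ y, (b x y : ℂ) * (f x - f y) := by
        rw [lap, ← mul_assoc, mul_one_div, div_self hmx, one_mul]
      have e3 : ∑ᶠ y, (b x y : ℂ) * (f x - f y) = ∑ y ∈ T, (b x y : ℂ) * (f x - f y) := by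
        apply finsum_eq_finset_sum_of_support_subset
        intro y hy
        simp only [mem_support] at hy
        have hbxy : b x y ≠ 0 := by
          intro h; apply hy; rw [h, Complex.ofReal_zero, zero_mul]
        exact hTnbr x hfx y (Or.inl hbxy)
      rw [e2, e3, Finset.sum_mul, Complex.re_sum]
      refine Finset.sum_congr rfl fun y _ => ?_
      rw [mul_assoc, Complex.re_ofReal_mul]
  -- pointwise algebra
  have hptw : ∀ z w : ℂ, ((z - w) * (starRingEnd ℂ) z).re
      = (1/2) * ‖z - w‖ ^ 2
        + ((1/2) * ‖z‖ ^ 2 - (1/2) * ‖w‖ ^ 2) := by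
    intro z w
    rw [Complex.sq_norm, Complex.sq_norm, Complex.sq_norm]
    simp only [Complex.normSq_apply, Complex.mul_re, Complex.sub_re, Complex.sub_im,
      Complex.conj_re, Complex.conj_im]
    ring
  set R := ∑ x ∈ T, ∑ y ∈ T, b x y * ‖f x - f y‖ ^ 2 with hR
  have hQ : (innerW m (lap b m f) f).re = (1/2) * R := by
    rw [hre]
    have expand : ∀ x y : V, b x y * ((f x - f y) * (starRingEnd ℂ) (f x)).re
        = (1/2) * (b x y * ‖f x - f y‖ ^ 2)
          + ((1/2) * (b x y * g x) - (1/2) * (b x y * g y)) := by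
      intro x y
      rw [hptw (f x) (f y), hg]
      ring
    rw [Finset.sum_congr rfl fun x _ => Finset.sum_congr rfl fun y _ => expand x y]
    simp only [Finset.sum_add_distrib, Finset.sum_sub_distrib, ← Finset.mul_sum]
    rw [hbal1 g hwg, hbal2 g hwg]
    rw [hR]
    ring
  -- positivity facts
  have hRnonneg : 0 ≤ R :=
    Finset.sum_nonneg fun x _ => Finset.sum_nonneg fun y _ =>
      mul_nonneg (hb_nonneg x y) (sq_nonneg _)
  have hfne : ∃ x, f x ≠ 0 := by
    by_contra hcon
    push_neg at hcon
    have : innerW m f f = 0 := by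
      rw [innerW]
      exact finsum_eq_zero_of_forall_eq_zero fun x => by rw [hcon x, mul_zero, map_zero, mul_zero]
    rw [hf_norm] at this
    exact one_ne_zero this
  obtain ⟨x₁, hx₁⟩ := hfne
  have hSm_pos : 0 < Sm := by
    refine Finset.sum_pos' (fun x _ => mul_nonneg (hβp_pos x).le (hg0 x)) ⟨x₁, hTmem x₁ hx₁, ?_⟩
    exact mul_pos (hβp_pos x₁) (pow_pos (norm_pos_iff.mpr hx₁) 2)
  -- core co-area bound
  have hcore : hC * Sm ≤ ∑ x ∈ T, ∑ y ∈ T, b x y * |g x - g y| := by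
    apply core_cheeger b hb_nonneg hβp_pos Ω T _ g hg0 (fun x hx => ?_) le_rfl
    have hfx := (hgne x).mp hx
    exact ⟨hf_supp hfx, hTmem x hfx, hTnbr x hfx⟩
  -- pointwise comparison with the Cauchy-Schwarz middle term
  have hD12 : ∑ x ∈ T, ∑ y ∈ T, b x y * |g x - g y|
      ≤ ∑ x ∈ T, ∑ y ∈ T, b x y *
          (‖f x - f y‖ * (‖f x‖ + ‖f y‖)) := by
    refine Finset.sum_le_sum fun x _ => Finset.sum_le_sum fun y _ => ?_
    refine mul_le_mul_of_nonneg_left ?_ (hb_nonneg x y)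
    have h1 : |g x - g y| = |‖f x‖ - ‖f y‖|
        * (‖f x‖ + ‖f y‖) := by
      rw [hg]
      rw [show ‖f x‖ ^ 2 - ‖f y‖ ^ 2
        = (‖f x‖ - ‖f y‖) * (‖f x‖ + ‖f y‖)
          by ring]
      rw [abs_mul, _root_.abs_of_nonneg
        (add_nonneg (norm_nonneg (f x)) (norm_nonneg (f y)))]
    rw [h1]
    exact mul_le_mul_of_nonneg_right
      (abs_norm_sub_norm_le (f x) (f y)) (by positivity)
  -- Cauchy-Schwarz
  set u : V × V → ℝ := fun p => Real.sqrt (b p.1 p.2) * ‖f p.1 - f p.2‖ with hu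
  set v : V × V → ℝ :=
    fun p => Real.sqrt (b p.1 p.2) * (‖f p.1‖ + ‖f p.2‖) with hv
  have hD2uv : ∑ x ∈ T, ∑ y ∈ T, b x y *
      (‖f x - f y‖ * (‖f x‖ + ‖f y‖))
      = ∑ p ∈ T ×ˢ T, u p * v p := by
    rw [Finset.sum_product]
    refine Finset.sum_congr rfl fun x _ => Finset.sum_congr rfl fun y _ => ?_
    rw [hu, hv]
    simp only
    rw [show Real.sqrt (b x y) * ‖f x - f y‖ *
      (Real.sqrt (b x y) * (‖f x‖ + ‖f y‖))
      = (Real.sqrt (b x y) * Real.sqrt (b x y)) *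
        (‖f x - f y‖ * (‖f x‖ + ‖f y‖)) by ring]
    rw [Real.mul_self_sqrt (hb_nonneg x y)]
  have hu2 : ∑ p ∈ T ×ˢ T, u p ^ 2 = R := by
    rw [hR, Finset.sum_product]
    refine Finset.sum_congr rfl fun x _ => Finset.sum_congr rfl fun y _ => ?_
    rw [hu]
    simp only
    rw [mul_pow, Real.sq_sqrt (hb_nonneg x y)]
  have hv2 : ∑ p ∈ T ×ˢ T, v p ^ 2 ≤ 4 * Sm := by
    have hstep : ∑ p ∈ T ×ˢ T, v p ^ 2
        ≤ ∑ x ∈ T, ∑ y ∈ T, (2 * (b x y * g x) + 2 * (b x y * g y)) := by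
      rw [Finset.sum_product]
      refine Finset.sum_le_sum fun x _ => Finset.sum_le_sum fun y _ => ?_
      rw [hv]
      simp only
      rw [mul_pow, Real.sq_sqrt (hb_nonneg x y), hg]
      simp only
      have hkey : (‖f x‖ + ‖f y‖) ^ 2
          ≤ 2 * ‖f x‖ ^ 2 + 2 * ‖f y‖ ^ 2 := by
        nlinarith [sq_nonneg (‖f x‖ - ‖f y‖)]
      nlinarith [hb_nonneg x y]
    refine hstep.trans ?_
    simp only [Finset.sum_add_distrib, ← Finset.mul_sum]
    rw [hbal1 g hwg, hbal2 g hwg, ← hSm]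
    ring_nf
    linarith
  have hCS := Finset.sum_mul_sq_le_sq_mul_sq (T ×ˢ T) u v
  -- combine
  have hC_nonneg : 0 ≤ hC := cheeger_nonneg b hb_nonneg hβp_pos Ω
  have hchain : hC * Sm ≤ ∑ p ∈ T ×ˢ T, u p * v p := by
    rw [← hD2uv]
    exact hcore.trans hD12
  have hCSb : (∑ p ∈ T ×ˢ T, u p * v p) ^ 2 ≤ R * (4 * Sm) := by
    refine hCS.trans ?_
    rw [hu2]
    exact mul_le_mul_of_nonneg_left hv2 hRnonneg
  have hsq : (hC * Sm) ^ 2 ≤ R * (4 * Sm) :=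
    le_trans (pow_le_pow_left₀ (mul_nonneg hC_nonneg hSm_pos.le) hchain 2) hCSb
  have hkey : hC ^ 2 * Sm ≤ 4 * R := by
    have h1 : (hC ^ 2 * Sm) * Sm ≤ (4 * R) * Sm := by nlinarith [hsq]
    exact le_of_mul_le_mul_right h1 hSm_pos
  -- mΩ ≤ Sm
  have hmΩ_le : mΩ ≤ Sm := by
    have hmΩ_pt : ∀ x, f x ≠ 0 → mΩ * (m x * g x) ≤ betaPlus b x * g x := by
      intro x hfx
      have hxΩ : x ∈ Ω := hf_supp hfx
      have hmem : betaPlus b x / m x ∈ {r : ℝ | ∃ x ∈ Ω, r = betaPlus b x / m x} :=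
        ⟨x, hxΩ, rfl⟩
      have hbdd : BddBelow {r : ℝ | ∃ x ∈ Ω, r = betaPlus b x / m x} := by
        refine ⟨0, ?_⟩
        rintro s ⟨z, hz, rfl⟩
        exact div_nonneg (hβp_pos z).le (hm_pos z).le
      have hle := csInf_le hbdd hmem
      have h2 : mΩ * m x ≤ betaPlus b x := by
        rw [le_div_iff₀ (hm_pos x)] at hle
        exact hle
      calc mΩ * (m x * g x) = (mΩ * m x) * g x := by ring
        _ ≤ betaPlus b x * g x := mul_le_mul_of_nonneg_right h2 (hg0 x)
    calc mΩ = mΩ * ∑ x ∈ T, m x * g x := by rw [hnorm1, mul_one]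
      _ = ∑ x ∈ T, mΩ * (m x * g x) := Finset.mul_sum _ _ _
      _ ≤ ∑ x ∈ T, betaPlus b x * g x := by
          refine Finset.sum_le_sum fun x _ => ?_
          by_cases hfx : f x = 0
          · have : g x = 0 := by rw [hg]; simp [hfx]
            rw [this]; simp
          · exact hmΩ_pt x hfx
      _ = Sm := hSm.symm
  -- finish
  rw [hQ]
  have hfin2 : mΩ * hC ^ 2 ≤ Sm * hC ^ 2 :=
    mul_le_mul_of_nonneg_right hmΩ_le (sq_nonneg hC)
  nlinarith [hkey, hfin2]
end

section
/- Assume Assumption (β), let Ω ⊆ V and suppose M_Ω = sup{ β⁺(x)/m(x) : x ∈ Ω } < ∞; set m_Ω = inf{ β⁺(x)/m(x) : x ∈ Ω }. Then for every element λ of the numerical range of the Dirichlet Laplacian on Ω, i.e., λ = (Δf, f)_m with f finitely supported, supp f ⊆ Ω and ‖f‖_m = 1, one has m_Ω (2 − √(4 − h̃(Ω)²)) ≤ 2 Re λ ≤ M_Ω (2 + √(4 − h̃(Ω)²)). -/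
open Function Complex

lemma coarea_aux {V : Type*} [DecidableEq V] (b : V → V → ℝ) (w : V → ℝ)
    (F s₀ : Finset V) (h : ℝ)
    (hU : ∀ U : Finset V, U.Nonempty → U ⊆ s₀ →
      h * ∑ x ∈ U, w x ≤ ∑ x ∈ F, ∑ y ∈ F,
        b x y * |(if x ∈ U then (1:ℝ) else 0) - (if y ∈ U then (1:ℝ) else 0)|) :
    ∀ s : Finset V, s ⊆ s₀ → ∀ u : V → ℝ, (∀ x, 0 ≤ u x) → (∀ x, u x ≠ 0 → x ∈ s) →
      h * ∑ x ∈ s, w x * u x ≤ ∑ x ∈ F, ∑ y ∈ F, b x y * |u x - u y| := by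
  intro s
  induction s using Finset.strongInduction with
  | _ s IH =>
    intro hs₀ u hu hsupp
    by_cases hzero : ∀ x, u x = 0
    · simp [hzero]
    · push_neg at hzero
      obtain ⟨x₁, hx₁⟩ := hzero
      set U := s.filter (fun x => u x ≠ 0) with hUdef
      have hUs : U ⊆ s := Finset.filter_subset _ _
      have hmemU : ∀ x, x ∈ U ↔ u x ≠ 0 := by
        intro x
        constructor
        · intro hx; exact (Finset.mem_filter.mp hx).2
        · intro hx; exact Finset.mem_filter.mpr ⟨hsupp x hx, hx⟩
      have hUne : U.Nonempty := ⟨x₁, (hmemU x₁).mpr hx₁⟩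
      set t := U.inf' hUne u with htdef
      obtain ⟨x₀, hx₀U, hx₀⟩ := Finset.exists_mem_eq_inf' hUne u
      have htle : ∀ x ∈ U, t ≤ u x := fun x hx => Finset.inf'_le u hx
      have htpos : 0 < t := by
        rw [htdef, hx₀]
        exact lt_of_le_of_ne (hu x₀) (Ne.symm ((hmemU x₀).mp hx₀U))
      have huzero : ∀ x, x ∉ U → u x = 0 := by
        intro x hx
        by_contra hne; exact hx ((hmemU x).mpr hne)
      set u' := fun x => u x - t * (if x ∈ U then (1:ℝ) else 0) with hu'def
      have hu'nonneg : ∀ x, 0 ≤ u' x := by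
        intro x; by_cases hx : x ∈ U
        · simp only [hu'def, hx, if_pos, mul_one]; linarith [htle x hx]
        · simp [hu'def, hx, huzero x hx]
      have hu'x₀ : u' x₀ = 0 := by
        simp only [hu'def, hx₀U, if_pos, mul_one]
        rw [htdef, hx₀]; ring
      have hu'supp : ∀ x, u' x ≠ 0 → x ∈ U.erase x₀ := by
        intro x hx
        by_cases hxU : x ∈ U
        · refine Finset.mem_erase.mpr ⟨?_, hxU⟩
          rintro rfl
          exact hx hu'x₀
        · exact absurd (by simp [hu'def, hxU, huzero x hxU]) hx
      have key2 : ∀ x y, x ∈ U → y ∉ U → |u x - u y| =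
          t * |(if x ∈ U then (1:ℝ) else 0) - (if y ∈ U then (1:ℝ) else 0)| + |u' x - u' y| := by
        intro x y hx hy
        have h1 : u y = 0 := huzero y hy
        have h2 : t ≤ u x := htle x hx
        simp only [hu'def, hx, hy, if_pos, if_neg, if_true, if_false, mul_one, mul_zero,
          sub_zero, h1]
        rw [_root_.abs_of_nonneg (by linarith : (0:ℝ) ≤ u x), _root_.abs_one,
          _root_.abs_of_nonneg (by linarith : (0:ℝ) ≤ u x - t)]
        ring
      have key : ∀ x y, |u x - u y| =
          t * |(if x ∈ U then (1:ℝ) else 0) - (if y ∈ U then (1:ℝ) else 0)| + |u' x - u' y| := by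
        intro x y
        by_cases hx : x ∈ U <;> by_cases hy : y ∈ U
        · simp [hu'def, hx, hy]
        · exact key2 x y hx hy
        · rw [_root_.abs_sub_comm (u x), _root_.abs_sub_comm (if x ∈ U then (1:ℝ) else 0),
            _root_.abs_sub_comm (u' x)]
          exact key2 y x hy hx
        · simp [hu'def, hx, hy, huzero x hx, huzero y hy]
      have hsum1 : ∑ x ∈ s, w x * u x = ∑ x ∈ U.erase x₀, w x * u' x + t * ∑ x ∈ U, w x := by
        have e1 : ∀ x ∈ s, w x * u x = w x * u' x + t * (if x ∈ U then w x else 0) := by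
          intro x hx
          by_cases hxU : x ∈ U <;> simp [hu'def, hxU] <;> ring
        rw [Finset.sum_congr rfl e1, Finset.sum_add_distrib, ← Finset.mul_sum,
          Finset.sum_ite_mem, Finset.inter_eq_right.mpr hUs]
        congr 1
        refine (Finset.sum_subset ((Finset.erase_subset _ _).trans hUs) ?_).symm
        intro x hxs hxe
        have : u' x = 0 := by
          by_contra hne; exact hxe (hu'supp x hne)
        rw [this, mul_zero]
      have hsum2 : ∑ x ∈ F, ∑ y ∈ F, b x y * |u x - u y|
          = t * (∑ x ∈ F, ∑ y ∈ F,
              b x y * |(if x ∈ U then (1:ℝ) else 0) - (if y ∈ U then (1:ℝ) else 0)|)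
            + ∑ x ∈ F, ∑ y ∈ F, b x y * |u' x - u' y| := by
        rw [Finset.mul_sum, ← Finset.sum_add_distrib]
        refine Finset.sum_congr rfl fun x _ => ?_
        rw [Finset.mul_sum, ← Finset.sum_add_distrib]
        refine Finset.sum_congr rfl fun y _ => ?_
        rw [key x y]; ring
      have hssub : U.erase x₀ ⊂ s :=
        (Finset.erase_ssubset hx₀U).trans_subset hUs
      have h1 := IH (U.erase x₀) hssub (((Finset.erase_subset _ _).trans hUs).trans hs₀)
        u' hu'nonneg hu'supp
      have h2 := hU U hUne (hUs.trans hs₀)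
      have h3 := mul_le_mul_of_nonneg_left h2 htpos.le
      rw [hsum1, hsum2, mul_add]
      have : h * (t * ∑ x ∈ U, w x) = t * (h * ∑ x ∈ U, w x) := by ring
      rw [this]
      linarith

/-- assume Assumption (β), let `Ω ⊆ V` with
`M_Ω = sup { β⁺(x)/m(x) : x ∈ Ω } < ∞` and `m_Ω = inf { β⁺(x)/m(x) : x ∈ Ω }`. Then for
every element `λ = (Δf, f)_m` of the numerical range of the Dirichlet Laplacian on `Ω`
(`f` finitely supported, `supp f ⊆ Ω`, `‖f‖_m = 1`) one has
`m_Ω (2 − √(4 − h̃(Ω)²)) ≤ 2 Re λ ≤ M_Ω (2 + √(4 − h̃(Ω)²))`. -/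
theorem numerical_range_cheeger_bounds
    (V : Type*) [Countable V] [DecidableEq V] (b : V → V → ℝ) (m : V → ℝ)
    (hb_nonneg : ∀ x y, 0 ≤ b x y)
    (hb_loop : ∀ x, b x x = 0)
    (hloc_fin : ∀ x, {y | b x y ≠ 0 ∨ b y x ≠ 0}.Finite)
    (hm_pos : ∀ x, 0 < m x)
    (hβp_pos : ∀ x, 0 < betaPlus b x)
    (hβm_pos : ∀ x, 0 < betaMinus b x)
    (hβ : ∀ x, betaPlus b x = betaMinus b x)
    (Ω : Set V)
    (hM : BddAbove {r : ℝ | ∃ x ∈ Ω, r = betaPlus b x / m x})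
    (f : V → ℂ) (hf : (support f).Finite) (hfΩ : support f ⊆ Ω)
    (hnorm : innerW m f f = 1) :
    sInf {r : ℝ | ∃ x ∈ Ω, r = betaPlus b x / m x} *
        (2 - Real.sqrt (4 - (cheeger b (betaPlus b) Ω) ^ 2))
      ≤ 2 * (innerW m (lap b m f) f).re ∧
    2 * (innerW m (lap b m f) f).re
      ≤ sSup {r : ℝ | ∃ x ∈ Ω, r = betaPlus b x / m x} *
          (2 + Real.sqrt (4 - (cheeger b (betaPlus b) Ω) ^ 2)) := by
  classical
  set K := hf.toFinset with hKdef
  set F := K ∪ K.biUnion (fun x => (hloc_fin x).toFinset) with hFdef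
  have hKF : K ⊆ F := Finset.subset_union_left
  have hnbr : ∀ x ∈ K, ∀ y, (b x y ≠ 0 ∨ b y x ≠ 0) → y ∈ F := by
    intro x hx y hy
    exact Finset.mem_union_right _
      (Finset.mem_biUnion.mpr ⟨x, hx, (hloc_fin x).mem_toFinset.mpr hy⟩)
  have hKsupp : ∀ x, f x ≠ 0 → x ∈ K := fun x hx => hf.mem_toFinset.mpr hx
  have hKzero : ∀ x, x ∉ K → f x = 0 := by
    intro x hx; by_contra hne; exact hx (hKsupp x hne)
  set u := fun x => ‖f x‖ ^ 2 with hudef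
  set g := fun x => ‖f x‖ with hgdef
  have husupp : ∀ x, u x ≠ 0 → x ∈ K := by
    intro x hx
    apply hKsupp
    intro hfx
    exact hx (by simp [hudef, hfx])
  have huzero : ∀ x, x ∉ K → u x = 0 := by
    intro x hx; rw [hudef]; simp [hKzero x hx]
  have hunn : ∀ x, 0 ≤ u x := fun x => by positivity
  -- betaPlus/betaMinus as finite sums
  have hbp : ∀ x ∈ K, betaPlus b x = ∑ y ∈ F, b x y := by
    intro x hx
    exact finsum_eq_finset_sum_of_support_subset _ (fun y hy => hnbr x hx y (Or.inl hy))
  have hbm : ∀ y ∈ K, betaMinus b y = ∑ x ∈ F, b x y := by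
    intro y hy
    exact finsum_eq_finset_sum_of_support_subset _ (fun x hx => hnbr y hy x (Or.inr hx))
  have claim1 : ∀ c : V → ℝ, (∀ x, c x ≠ 0 → x ∈ K) →
      ∑ x ∈ F, ∑ y ∈ F, b x y * c x = ∑ x ∈ F, betaPlus b x * c x := by
    intro c hc
    refine Finset.sum_congr rfl fun x _ => ?_
    by_cases hcx : c x = 0
    · simp [hcx]
    · rw [← Finset.sum_mul, ← hbp x (hc x hcx)]
  have claim2 : ∀ c : V → ℝ, (∀ x, c x ≠ 0 → x ∈ K) →
      ∑ x ∈ F, ∑ y ∈ F, b x y * c y = ∑ y ∈ F, betaPlus b y * c y := by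
    intro c hc
    rw [Finset.sum_comm]
    refine Finset.sum_congr rfl fun y _ => ?_
    by_cases hcy : c y = 0
    · simp [hcy]
    · rw [← Finset.sum_mul, hβ y, ← hbm y (hc y hcy)]
  -- normalization
  have hnorm' : ∑ x ∈ F, m x * u x = 1 := by
    have e0 : ∀ x, (m x : ℂ) * f x * (starRingEnd ℂ) (f x) = ((m x * u x : ℝ) : ℂ) := by
      intro x
      have hux : u x = Complex.normSq (f x) := by rw [hudef]; exact Complex.sq_norm (f x)
      rw [mul_assoc, Complex.mul_conj, hux, ← Complex.ofReal_mul]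
    have e1 : innerW m f f = ∑ x ∈ F, ((m x * u x : ℝ) : ℂ) := by
      rw [innerW]
      rw [show (fun x => (m x : ℂ) * f x * (starRingEnd ℂ) (f x))
            = fun x => ((m x * u x : ℝ) : ℂ) from funext e0]
      refine finsum_eq_finset_sum_of_support_subset _ ?_
      intro x hx
      apply hKF
      apply husupp
      intro hux
      apply hx
      simp [hux]
    rw [e1] at hnorm
    have := congrArg Complex.re hnorm
    rw [Complex.re_sum] at this
    simpa using this
  -- the main real-part computation
  have hlap2 : innerW m (lap b m f) f
      = ∑ x ∈ F, ∑ y ∈ F, (b x y : ℂ) * (f x - f y) * (starRingEnd ℂ) (f x) := by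
    have e1 : innerW m (lap b m f) f
        = ∑ x ∈ K, (m x : ℂ) * lap b m f x * (starRingEnd ℂ) (f x) := by
      rw [innerW]
      refine finsum_eq_finset_sum_of_support_subset _ ?_
      intro x hx
      apply hKsupp
      intro hfx
      apply hx
      simp [hfx]
    have e2 : ∀ x ∈ K, (m x : ℂ) * lap b m f x * (starRingEnd ℂ) (f x)
        = ∑ y ∈ F, (b x y : ℂ) * (f x - f y) * (starRingEnd ℂ) (f x) := by
      intro x hx
      have hm' : (m x : ℂ) ≠ 0 := Complex.ofReal_ne_zero.mpr (hm_pos x).ne'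
      have e3 : (∑ᶠ y, (b x y : ℂ) * (f x - f y)) = ∑ y ∈ F, (b x y : ℂ) * (f x - f y) := by
        refine finsum_eq_finset_sum_of_support_subset _ ?_
        intro y hy
        apply hnbr x hx y
        left
        intro hb0
        apply hy
        simp [hb0]
      rw [lap, e3, ← Finset.sum_mul]
      field_simp
    rw [e1, Finset.sum_congr rfl e2]
    refine Finset.sum_subset hKF ?_
    intro x _ hx
    rw [hKzero x hx]
    simp
  have hterm : ∀ (r : ℝ) (z w : ℂ), 2 * ((r : ℂ) * (z - w) * (starRingEnd ℂ) z).re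
      = r * (‖z‖ ^ 2 - ‖w‖ ^ 2) + r * ‖z - w‖ ^ 2 := by
    intro r z w
    rw [Complex.sq_norm, Complex.sq_norm, Complex.sq_norm]
    simp [Complex.mul_re, Complex.sub_re, Complex.sub_im, Complex.conj_re, Complex.conj_im,
      Complex.normSq_apply, Complex.ofReal_re, Complex.ofReal_im]
    ring
  have hP : 2 * (innerW m (lap b m f) f).re
      = ∑ x ∈ F, ∑ y ∈ F, b x y * ‖f x - f y‖ ^ 2 := by
    have e1 : 2 * (innerW m (lap b m f) f).re
        = ∑ x ∈ F, ∑ y ∈ F, (b x y * (u x - u y) + b x y * ‖f x - f y‖ ^ 2) := by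
      rw [hlap2, Complex.re_sum, Finset.mul_sum]
      refine Finset.sum_congr rfl fun x _ => ?_
      rw [Complex.re_sum, Finset.mul_sum]
      refine Finset.sum_congr rfl fun y _ => ?_
      rw [hterm (b x y) (f x) (f y)]
    have e2 : ∑ x ∈ F, ∑ y ∈ F, b x y * (u x - u y) = 0 := by
      have e3 : ∀ x ∈ F, ∀ y ∈ F, b x y * (u x - u y) = b x y * u x - b x y * u y :=
        fun x _ y _ => by ring
      calc ∑ x ∈ F, ∑ y ∈ F, b x y * (u x - u y)
          = ∑ x ∈ F, ∑ y ∈ F, (b x y * u x - b x y * u y) := by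
            refine Finset.sum_congr rfl fun x hx => Finset.sum_congr rfl fun y hy => e3 x hx y hy
        _ = (∑ x ∈ F, ∑ y ∈ F, b x y * u x) - ∑ x ∈ F, ∑ y ∈ F, b x y * u y := by
            rw [← Finset.sum_sub_distrib]
            exact Finset.sum_congr rfl fun x _ => Finset.sum_sub_distrib _ _
        _ = 0 := by rw [claim1 u husupp, claim2 u husupp, sub_self]
    calc 2 * (innerW m (lap b m f) f).re
        = ∑ x ∈ F, ∑ y ∈ F, (b x y * (u x - u y) + b x y * ‖f x - f y‖ ^ 2) := e1
      _ = (∑ x ∈ F, ∑ y ∈ F, b x y * (u x - u y))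
          + ∑ x ∈ F, ∑ y ∈ F, b x y * ‖f x - f y‖ ^ 2 := by
          rw [← Finset.sum_add_distrib]
          exact Finset.sum_congr rfl fun x _ => Finset.sum_add_distrib
      _ = ∑ x ∈ F, ∑ y ∈ F, b x y * ‖f x - f y‖ ^ 2 := by rw [e2, zero_add]
    -- named quantities
  set P := ∑ x ∈ F, ∑ y ∈ F, b x y * ‖f x - f y‖ ^ 2 with hPdef
  set S := ∑ x ∈ F, ∑ y ∈ F, b x y * (g x - g y) ^ 2 with hSdef
  set D := ∑ x ∈ F, ∑ y ∈ F, b x y * (g x + g y) ^ 2 with hDdef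
  set T := ∑ x ∈ F, ∑ y ∈ F, b x y * |u x - u y| with hTdef
  set a := ∑ x ∈ F, betaPlus b x * u x with hadef
  have hgnn : ∀ x, 0 ≤ g x := fun x => norm_nonneg _
  have hSD : S + D = 4 * a := by
    have e1 : S + D = ∑ x ∈ F, ∑ y ∈ F, (2 * (b x y * u x) + 2 * (b x y * u y)) := by
      rw [hSdef, hDdef, ← Finset.sum_add_distrib]
      refine Finset.sum_congr rfl fun x _ => ?_
      rw [← Finset.sum_add_distrib]
      refine Finset.sum_congr rfl fun y _ => ?_
      simp only [hudef, hgdef]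
      ring
    have e2 : ∑ x ∈ F, ∑ y ∈ F, (2 * (b x y * u x) + 2 * (b x y * u y))
        = 2 * (∑ x ∈ F, ∑ y ∈ F, b x y * u x) + 2 * ∑ x ∈ F, ∑ y ∈ F, b x y * u y := by
      rw [Finset.mul_sum, Finset.mul_sum, ← Finset.sum_add_distrib]
      refine Finset.sum_congr rfl fun x _ => ?_
      rw [Finset.mul_sum, Finset.mul_sum, ← Finset.sum_add_distrib]
    rw [e1, e2, claim1 u husupp, claim2 u husupp]
    ring
  have hSP : S ≤ P := by
    refine Finset.sum_le_sum fun x _ => Finset.sum_le_sum fun y _ => ?_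
    refine mul_le_mul_of_nonneg_left ?_ (hb_nonneg x y)
    have h1 : |g x - g y| ≤ ‖f x - f y‖ := by
      simpa [hgdef] using abs_norm_sub_norm_le (f x) (f y)
    calc (g x - g y) ^ 2 = |g x - g y| ^ 2 := (_root_.sq_abs _).symm
      _ ≤ ‖f x - f y‖ ^ 2 := pow_le_pow_left₀ (abs_nonneg _) h1 2
  have hPD : P ≤ D := by
    refine Finset.sum_le_sum fun x _ => Finset.sum_le_sum fun y _ => ?_
    refine mul_le_mul_of_nonneg_left ?_ (hb_nonneg x y)
    have h1 : ‖f x - f y‖ ≤ g x + g y := by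
      simpa [hgdef] using norm_sub_le (f x) (f y)
    exact pow_le_pow_left₀ (norm_nonneg _) h1 2
  have hCS : T ^ 2 ≤ S * D := by
    have hT2 : T = ∑ p ∈ F ×ˢ F,
        (Real.sqrt (b p.1 p.2) * |g p.1 - g p.2|) * (Real.sqrt (b p.1 p.2) * (g p.1 + g p.2)) := by
      rw [hTdef, Finset.sum_product]
      refine Finset.sum_congr rfl fun x _ => Finset.sum_congr rfl fun y _ => ?_
      have e1 : |u x - u y| = |g x - g y| * (g x + g y) := by
        have e0 : u x - u y = (g x - g y) * (g x + g y) := by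
          simp only [hudef, hgdef]; ring
        rw [e0, abs_mul, _root_.abs_of_nonneg (add_nonneg (hgnn x) (hgnn y))]
      rw [e1, show (Real.sqrt (b x y) * |g x - g y|) * (Real.sqrt (b x y) * (g x + g y))
          = (Real.sqrt (b x y) * Real.sqrt (b x y)) * (|g x - g y| * (g x + g y)) by ring,
        Real.mul_self_sqrt (hb_nonneg x y)]
    have hS2 : S = ∑ p ∈ F ×ˢ F, (Real.sqrt (b p.1 p.2) * |g p.1 - g p.2|) ^ 2 := by
      rw [hSdef, Finset.sum_product]
      refine Finset.sum_congr rfl fun x _ => Finset.sum_congr rfl fun y _ => ?_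
      rw [mul_pow, Real.sq_sqrt (hb_nonneg x y), _root_.sq_abs]
    have hD2 : D = ∑ p ∈ F ×ˢ F, (Real.sqrt (b p.1 p.2) * (g p.1 + g p.2)) ^ 2 := by
      rw [hDdef, Finset.sum_product]
      refine Finset.sum_congr rfl fun x _ => Finset.sum_congr rfl fun y _ => ?_
      rw [mul_pow, Real.sq_sqrt (hb_nonneg x y)]
    rw [hT2, hS2, hD2]
    exact Finset.sum_mul_sq_le_sq_mul_sq _ _ _
  -- boundary identity
  have hbdry : ∀ U : Finset V, U ⊆ K → bdryWeight b U
      = ∑ x ∈ F, ∑ y ∈ F,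
          b x y * |(if x ∈ U then (1:ℝ) else 0) - (if y ∈ U then (1:ℝ) else 0)| := by
    intro U hUK
    have e1 : ∀ x ∈ U, (∑ᶠ y, (if y ∈ U then (0:ℝ) else b x y + b y x))
        = ∑ y ∈ F, (if y ∈ U then (0:ℝ) else b x y + b y x) := by
      intro x hx
      refine finsum_eq_finset_sum_of_support_subset _ ?_
      intro y hy
      simp only [mem_support] at hy
      by_cases hyU : y ∈ U
      · simp [hyU] at hy
      · rw [if_neg hyU] at hy
        apply hnbr x (hUK hx) y
        by_contra hcon
        push_neg at hcon
        exact hy (by rw [hcon.1, hcon.2, add_zero])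
    have e2 : ∀ x y, b x y * |(if x ∈ U then (1:ℝ) else 0) - (if y ∈ U then (1:ℝ) else 0)|
        = (if x ∈ U then (if y ∈ U then (0:ℝ) else b x y) else 0)
          + (if y ∈ U then (if x ∈ U then (0:ℝ) else b x y) else 0) := by
      intro x y
      by_cases hx : x ∈ U <;> by_cases hy : y ∈ U <;> simp [hx, hy]
    have hUF : U ⊆ F := hUK.trans hKF
    have eA : ∑ x ∈ F, ∑ y ∈ F, (if x ∈ U then (if y ∈ U then (0:ℝ) else b x y) else 0)
        = ∑ x ∈ U, ∑ y ∈ F, (if y ∈ U then (0:ℝ) else b x y) := by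
      have e3 : ∀ x ∈ F, ∑ y ∈ F, (if x ∈ U then (if y ∈ U then (0:ℝ) else b x y) else 0)
          = (if x ∈ U then ∑ y ∈ F, (if y ∈ U then (0:ℝ) else b x y) else 0) := by
        intro x _
        by_cases hx : x ∈ U <;> simp [hx]
      rw [Finset.sum_congr rfl e3, Finset.sum_ite_mem, Finset.inter_eq_right.mpr hUF]
    have eB : ∑ x ∈ F, ∑ y ∈ F, (if y ∈ U then (if x ∈ U then (0:ℝ) else b x y) else 0)
        = ∑ x ∈ U, ∑ y ∈ F, (if y ∈ U then (0:ℝ) else b y x) := by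
      rw [Finset.sum_comm]
      have e3 : ∀ y ∈ F, ∑ x ∈ F, (if y ∈ U then (if x ∈ U then (0:ℝ) else b x y) else 0)
          = (if y ∈ U then ∑ x ∈ F, (if x ∈ U then (0:ℝ) else b x y) else 0) := by
        intro y _
        by_cases hy : y ∈ U <;> simp [hy]
      rw [Finset.sum_congr rfl e3, Finset.sum_ite_mem, Finset.inter_eq_right.mpr hUF]
    calc bdryWeight b U
        = ∑ x ∈ U, ∑ y ∈ F, (if y ∈ U then (0:ℝ) else b x y + b y x) := by
          rw [bdryWeight]; exact Finset.sum_congr rfl e1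
      _ = (∑ x ∈ U, ∑ y ∈ F, (if y ∈ U then (0:ℝ) else b x y))
          + ∑ x ∈ U, ∑ y ∈ F, (if y ∈ U then (0:ℝ) else b y x) := by
          rw [← Finset.sum_add_distrib]
          refine Finset.sum_congr rfl fun x _ => ?_
          rw [← Finset.sum_add_distrib]
          refine Finset.sum_congr rfl fun y _ => ?_
          by_cases hy : y ∈ U <;> simp [hy]
      _ = ∑ x ∈ F, ∑ y ∈ F,
          b x y * |(if x ∈ U then (1:ℝ) else 0) - (if y ∈ U then (1:ℝ) else 0)| := by
          rw [← eA, ← eB, ← Finset.sum_add_distrib]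
          refine (Finset.sum_congr rfl fun x _ => ?_).symm
          rw [← Finset.sum_add_distrib]
          exact Finset.sum_congr rfl fun y _ => e2 x y
  have hbdrynn : ∀ U : Finset V, 0 ≤ bdryWeight b U := by
    intro U
    refine Finset.sum_nonneg fun x _ => finsum_nonneg fun y => ?_
    by_cases hy : y ∈ U
    · simp [hy]
    · rw [if_neg hy]; exact add_nonneg (hb_nonneg x y) (hb_nonneg y x)
  have hbdd : BddBelow {r : ℝ | ∃ U : Finset V, U.Nonempty ∧ ↑U ⊆ Ω ∧
      r = bdryWeight b U / ∑ x ∈ U, betaPlus b x} := by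
    refine ⟨0, ?_⟩
    rintro r ⟨U', _, _, rfl⟩
    exact div_nonneg (hbdrynn U') (Finset.sum_nonneg fun x _ => (hβp_pos x).le)
  have hh0 : 0 ≤ cheeger b (betaPlus b) Ω := by
    apply Real.sInf_nonneg
    rintro r ⟨U, _, _, rfl⟩
    exact div_nonneg (hbdrynn U) (Finset.sum_nonneg fun x _ => (hβp_pos x).le)
  have hUineq : ∀ U : Finset V, U.Nonempty → U ⊆ K →
      cheeger b (betaPlus b) Ω * ∑ x ∈ U, betaPlus b x
        ≤ ∑ x ∈ F, ∑ y ∈ F,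
            b x y * |(if x ∈ U then (1:ℝ) else 0) - (if y ∈ U then (1:ℝ) else 0)| := by
    intro U hUne hUK
    have hUΩ : ↑U ⊆ Ω := by
      intro x hx
      exact hfΩ (hf.mem_toFinset.mp (hUK hx))
    have hden : 0 < ∑ x ∈ U, betaPlus b x := Finset.sum_pos (fun x _ => hβp_pos x) hUne
    have hle : cheeger b (betaPlus b) Ω ≤ bdryWeight b U / ∑ x ∈ U, betaPlus b x :=
      csInf_le hbdd ⟨U, hUne, hUΩ, rfl⟩
    rw [← hbdry U hUK]
    calc cheeger b (betaPlus b) Ω * ∑ x ∈ U, betaPlus b x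
        ≤ (bdryWeight b U / ∑ x ∈ U, betaPlus b x) * ∑ x ∈ U, betaPlus b x :=
          mul_le_mul_of_nonneg_right hle hden.le
      _ = bdryWeight b U := div_mul_cancel₀ _ hden.ne'
  have hcoarea : cheeger b (betaPlus b) Ω * a ≤ T := by
    have e1 : ∑ x ∈ K, betaPlus b x * u x = a := by
      rw [hadef]
      exact Finset.sum_subset hKF fun x _ hx => by rw [huzero x hx, mul_zero]
    have h2 := coarea_aux b (betaPlus b) F K (cheeger b (betaPlus b) Ω) hUineq K subset_rfl
      u hunn husupp
    rw [e1] at h2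
    exact h2
  -- comparison with a
  have hmbb : BddBelow {r : ℝ | ∃ x ∈ Ω, r = betaPlus b x / m x} := by
    refine ⟨0, ?_⟩
    rintro r ⟨x, _, rfl⟩
    exact div_nonneg (hβp_pos x).le (hm_pos x).le
  have ham : sInf {r : ℝ | ∃ x ∈ Ω, r = betaPlus b x / m x} ≤ a := by
    have hmono : ∀ x ∈ F, sInf {r : ℝ | ∃ x ∈ Ω, r = betaPlus b x / m x} * (m x * u x)
        ≤ betaPlus b x * u x := by
      intro x _
      by_cases hux : u x = 0
      · rw [hux]; simp
      · have hxΩ : x ∈ Ω := hfΩ (hf.mem_toFinset.mp (husupp x hux))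
        have h1 : sInf {r : ℝ | ∃ x ∈ Ω, r = betaPlus b x / m x} ≤ betaPlus b x / m x :=
          csInf_le hmbb ⟨x, hxΩ, rfl⟩
        have h2 := (le_div_iff₀ (hm_pos x)).mp h1
        calc sInf {r : ℝ | ∃ x ∈ Ω, r = betaPlus b x / m x} * (m x * u x)
            = (sInf {r : ℝ | ∃ x ∈ Ω, r = betaPlus b x / m x} * m x) * u x := by ring
          _ ≤ betaPlus b x * u x := mul_le_mul_of_nonneg_right h2 (hunn x)
    calc sInf {r : ℝ | ∃ x ∈ Ω, r = betaPlus b x / m x}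
        = sInf {r : ℝ | ∃ x ∈ Ω, r = betaPlus b x / m x} * ∑ x ∈ F, m x * u x := by
          rw [hnorm', mul_one]
      _ = ∑ x ∈ F, sInf {r : ℝ | ∃ x ∈ Ω, r = betaPlus b x / m x} * (m x * u x) :=
          Finset.mul_sum _ _ _
      _ ≤ ∑ x ∈ F, betaPlus b x * u x := Finset.sum_le_sum hmono
      _ = a := by rw [hadef]
  have haM : a ≤ sSup {r : ℝ | ∃ x ∈ Ω, r = betaPlus b x / m x} := by
    have hmono : ∀ x ∈ F, betaPlus b x * u x
        ≤ sSup {r : ℝ | ∃ x ∈ Ω, r = betaPlus b x / m x} * (m x * u x) := by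
      intro x _
      by_cases hux : u x = 0
      · rw [hux]; simp
      · have hxΩ : x ∈ Ω := hfΩ (hf.mem_toFinset.mp (husupp x hux))
        have h1 : betaPlus b x / m x ≤ sSup {r : ℝ | ∃ x ∈ Ω, r = betaPlus b x / m x} :=
          le_csSup hM ⟨x, hxΩ, rfl⟩
        have h2 := (div_le_iff₀ (hm_pos x)).mp h1
        calc betaPlus b x * u x
            ≤ (sSup {r : ℝ | ∃ x ∈ Ω, r = betaPlus b x / m x} * m x) * u x :=
              mul_le_mul_of_nonneg_right h2 (hunn x)
          _ = sSup {r : ℝ | ∃ x ∈ Ω, r = betaPlus b x / m x} * (m x * u x) := by ring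
    calc a = ∑ x ∈ F, betaPlus b x * u x := by rw [hadef]
      _ ≤ ∑ x ∈ F, sSup {r : ℝ | ∃ x ∈ Ω, r = betaPlus b x / m x} * (m x * u x) :=
          Finset.sum_le_sum hmono
      _ = sSup {r : ℝ | ∃ x ∈ Ω, r = betaPlus b x / m x} * ∑ x ∈ F, m x * u x :=
          (Finset.mul_sum _ _ _).symm
      _ = sSup {r : ℝ | ∃ x ∈ Ω, r = betaPlus b x / m x} := by rw [hnorm', mul_one]
  -- final algebra
  have hTnn : 0 ≤ T := Finset.sum_nonneg fun x _ => Finset.sum_nonneg fun y _ =>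
    mul_nonneg (hb_nonneg x y) (abs_nonneg _)
  have hSnn : 0 ≤ S := Finset.sum_nonneg fun x _ => Finset.sum_nonneg fun y _ =>
    mul_nonneg (hb_nonneg x y) (sq_nonneg _)
  have hann : 0 ≤ a := Finset.sum_nonneg fun x _ => mul_nonneg (hβp_pos x).le (hunn x)
  set h₀ := cheeger b (betaPlus b) Ω with hh₀def
  set s₀ := Real.sqrt (4 - h₀ ^ 2) with hs₀def
  have hs₀nn : 0 ≤ s₀ := Real.sqrt_nonneg _
  have hs₀le : s₀ ≤ 2 := by
    have h1 : (4:ℝ) - h₀ ^ 2 ≤ 2 ^ 2 := by nlinarith [sq_nonneg h₀]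
    calc s₀ ≤ Real.sqrt (2 ^ 2) := Real.sqrt_le_sqrt h1
      _ = 2 := Real.sqrt_sq (by norm_num)
  have hha : (h₀ * a) ^ 2 ≤ S * D := by
    calc (h₀ * a) ^ 2 ≤ T ^ 2 := pow_le_pow_left₀ (mul_nonneg hh0 hann) hcoarea 2
      _ ≤ S * D := hCS
  have hcore : 2 * a - S ≤ a * s₀ := by
    rcases le_or_gt (2 * a) S with hc | hc
    · nlinarith [mul_nonneg hann hs₀nn]
    · have hD : D = 4 * a - S := by linarith [hSD]
      rw [hD] at hha
      have h1 : (2 * a - S) ^ 2 ≤ (4 - h₀ ^ 2) * a ^ 2 := by nlinarith [hha]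
      have h2 : (0:ℝ) ≤ 2 * a - S := by linarith
      calc 2 * a - S = Real.sqrt ((2 * a - S) ^ 2) := (Real.sqrt_sq h2).symm
        _ ≤ Real.sqrt ((4 - h₀ ^ 2) * a ^ 2) := Real.sqrt_le_sqrt h1
        _ = s₀ * a := by rw [Real.sqrt_mul' _ (sq_nonneg a), Real.sqrt_sq hann, hs₀def]
        _ = a * s₀ := mul_comm _ _
  constructor
  · calc sInf {r : ℝ | ∃ x ∈ Ω, r = betaPlus b x / m x} * (2 - s₀)
        ≤ a * (2 - s₀) := mul_le_mul_of_nonneg_right ham (by linarith)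
      _ ≤ S := by
          have e : a * (2 - s₀) = 2 * a - a * s₀ := by ring
          linarith [hcore]
      _ ≤ P := hSP
      _ = 2 * (innerW m (lap b m f) f).re := hP.symm
  · calc 2 * (innerW m (lap b m f) f).re = P := hP
      _ ≤ D := hPD
      _ = 4 * a - S := by linarith [hSD]
      _ ≤ a * (2 + s₀) := by
          have e : a * (2 + s₀) = 2 * a + a * s₀ := by ring
          linarith [hcore]
      _ ≤ sSup {r : ℝ | ∃ x ∈ Ω, r = betaPlus b x / m x} * (2 + s₀) :=
          mul_le_mul_of_nonneg_right haM (by linarith)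
end
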